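/- Let G and H be étale groupoids with an actor h : G ↷ H (a continuous left action of G on H, with anchor ρ : H → G⁽⁰⁾ satisfying ρ(xy) = ρ(x), commuting with right multiplication of H on itself: γ·(xy) = (γ·x)y and s(γ·x) = s(x)). Then the multiplication map G ×_{s,ρ} H → H, (γ, x) ↦ γ·x, is an open map. -/

import Mathlib

open Topology

/-- A topological groupoid: a set with a partially defined multiplication
(`D a b` expresses composability), an inversion, satisfying the groupoid
axioms, such that inversion is continuous and multiplication is continuous
on the set of composable pairs. -/
structure TopGroupoid (G : Type*) [TopologicalSpace G] where
  /-- composability -/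
  D : G → G → Prop
  /-- partially defined multiplication (junk values off `D`) -/
  comp : G → G → G
  /-- inversion -/
  inv : G → G
  inv_inv : ∀ g, inv (inv g) = g
  d_inv : ∀ g, D g (inv g)
  d_eq : ∀ a b, D a b ↔ comp (inv a) a = comp b (inv b)
  d_comp_left : ∀ {a b c}, D a b → D b c → D (comp a b) c
  d_comp_right : ∀ {a b c}, D a b → D b c → D a (comp b c)
  assoc : ∀ {a b c}, D a b → D b c → comp (comp a b) c = comp a (comp b c)
  cancel_left : ∀ {g h}, D g h → comp (inv g) (comp g h) = h
  cancel_right : ∀ {g h}, D g h → comp (comp g h) (inv h) = g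
  continuous_inv : Continuous inv
  continuousOn_comp : ContinuousOn (fun p : G × G => comp p.1 p.2) {p | D p.1 p.2}

namespace TopGroupoid

variable {G : Type*} [TopologicalSpace G]

/-- The source map `s(γ) = γ⁻¹γ`. -/
def src (S : TopGroupoid G) (g : G) : G := S.comp (S.inv g) g

/-- The range map `r(γ) = γγ⁻¹`. -/
def rng (S : TopGroupoid G) (g : G) : G := S.comp g (S.inv g)

/-- The unit space `G⁽⁰⁾ = {γ⁻¹γ : γ ∈ G}`. -/
def unitSpace (S : TopGroupoid G) : Set G := Set.range S.src

/-- A groupoid is étale if its range map is a local homeomorphism. -/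
def IsEtale (S : TopGroupoid G) : Prop := IsLocalHomeomorph S.rng

/-- An open bisection: an open set on which both the source and the range map
are injective (hence, in an étale groupoid, restrict to homeomorphisms onto
their open images). -/
def IsOpenBisection (S : TopGroupoid G) (U : Set G) : Prop :=
  IsOpen U ∧ Set.InjOn S.src U ∧ Set.InjOn S.rng U

/-- Pointwise product of subsets: `U·V = {γη : γ ∈ U, η ∈ V, s γ = r η}`. -/
def setMul (S : TopGroupoid G) (U V : Set G) : Set G :=
  {g | ∃ a ∈ U, ∃ b ∈ V, S.D a b ∧ g = S.comp a b}

/-- Pointwise inverse of a subset: `U⁻¹ = {γ⁻¹ : γ ∈ U}`. -/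
def setInv (S : TopGroupoid G) (U : Set G) : Set G := S.inv '' U

end TopGroupoid

/-- An actor `G ↷ H`: a continuous left action of `G` on `H` (with anchor map
`ρ : H → G⁽⁰⁾`) which commutes with the right multiplication of `H` on itself. -/
structure Actor {G : Type*} {H : Type*} [TopologicalSpace G] [TopologicalSpace H]
    (S : TopGroupoid G) (T : TopGroupoid H) where
  /-- the anchor map -/
  rho : H → G
  /-- the action multiplication, partially defined (junk off `s γ = ρ x`) -/
  act : G → H → H
  rho_mem : ∀ x, rho x ∈ S.unitSpace
  continuous_rho : Continuous rho
  continuousOn_act :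
    ContinuousOn (fun p : G × H => act p.1 p.2) {p | S.src p.1 = rho p.2}
  rho_act : ∀ {γ x}, S.src γ = rho x → rho (act γ x) = S.rng γ
  act_assoc : ∀ {γ₁ γ₂ x}, S.D γ₁ γ₂ → S.src γ₂ = rho x →
      act γ₁ (act γ₂ x) = act (S.comp γ₁ γ₂) x
  act_unit : ∀ x, act (rho x) x = x
  rho_comp : ∀ {x y}, T.D x y → rho (T.comp x y) = rho x
  src_act : ∀ {γ x}, S.src γ = rho x → T.src (act γ x) = T.src x
  act_right : ∀ {γ x y}, S.src γ = rho x → T.D x y →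
      act γ (T.comp x y) = T.comp (act γ x) y

namespace Actor

variable {G H : Type*} [TopologicalSpace G] [TopologicalSpace H]
variable {S : TopGroupoid G} {T : TopGroupoid H}

/-- An actor is free if the only arrows fixing a unit are units. -/
def Free (A : Actor S T) : Prop :=
  ∀ t ∈ T.unitSpace, ∀ γ : G, S.src γ = A.rho t → A.act γ t = t → γ ∈ S.unitSpace

/-- An actor is proper if the anchor map restricted to the unit space of `H`
is a proper map. -/
def Proper (A : Actor S T) : Prop := IsProperMap (T.unitSpace.restrict A.rho)

/-- `U·V = {γ·x : γ ∈ U, x ∈ V, s γ = ρ x}`. -/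
def actSet (A : Actor S T) (U : Set G) (V : Set H) : Set H :=
  {y | ∃ γ ∈ U, ∃ x ∈ V, S.src γ = A.rho x ∧ y = A.act γ x}

end Actor

/-- For an actor `h : G ↷ H` between étale groupoids, the multiplication map
`G ×_{s,ρ} H → H`, `(γ, x) ↦ γ·x`, is an open map. -/
theorem actor_mul_isOpenMap {G H : Type*} [TopologicalSpace G] [TopologicalSpace H]
    {S : TopGroupoid G} {T : TopGroupoid H} (hS : S.IsEtale) (hT : T.IsEtale)
    (A : Actor S T) :
    IsOpenMap (fun p : {p : G × H // S.src p.1 = A.rho p.2} => A.act p.1.1 p.1.2) := by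
  intro W hW
  obtain ⟨W', hW', rfl⟩ := isOpen_induced_iff.mp hW
  rw [isOpen_iff_mem_nhds]
  rintro y ⟨⟨⟨γ₀, x₀⟩, hp⟩, hpW, rfl⟩
  simp only at hpW ⊢
  obtain ⟨e, heγ, he⟩ := hS γ₀
  -- helper facts
  have hsrcinv : ∀ g : G, S.src (S.inv g) = S.rng g := fun g => by
    simp [TopGroupoid.src, TopGroupoid.rng, S.inv_inv]
  have hDinvself : ∀ g : G, S.D (S.inv g) g := fun g => by
    have := S.d_inv (S.inv g); rwa [S.inv_inv] at this
  have hcompinv : ∀ g : G, S.comp g (S.inv g) = S.rng g := fun g => rfl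
  set ψ : H → G × H :=
    fun z => (e.symm (A.rho z), A.act (S.inv (e.symm (A.rho z))) z) with hψdef
  set O : Set H := A.rho ⁻¹' e.target with hOdef
  have hOopen : IsOpen O := e.open_target.preimage A.continuous_rho
  -- on O, the pair fed to `act` is composable
  have hkey : ∀ z ∈ O, S.src (S.inv (e.symm (A.rho z))) = A.rho z := by
    intro z hz
    rw [hsrcinv, he]
    exact e.right_inv hz
  have hcont : ContinuousOn ψ O := by
    have h1 : ContinuousOn (fun z : H => e.symm (A.rho z)) O :=
      e.continuousOn_symm.comp A.continuous_rho.continuousOn (fun z hz => hz)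
    refine h1.prodMk ?_
    refine A.continuousOn_act.comp
      ((S.continuous_inv.comp_continuousOn h1).prodMk continuousOn_id) ?_
    intro z hz
    exact hkey z hz
  set V : Set H := O ∩ ψ ⁻¹' W' with hVdef
  have hVopen : IsOpen V := hcont.isOpen_inter_preimage hOopen hW'
  -- ρ (γ₀ · x₀) = rng γ₀
  have hrho0 : A.rho (A.act γ₀ x₀) = S.rng γ₀ := A.rho_act hp
  have hy₀O : A.act γ₀ x₀ ∈ O := by
    rw [hOdef, Set.mem_preimage, hrho0, he]
    exact e.map_source heγ
  have hsymm0 : e.symm (A.rho (A.act γ₀ x₀)) = γ₀ := by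
    rw [hrho0, he]; exact e.left_inv heγ
  have hψy₀ : ψ (A.act γ₀ x₀) = (γ₀, x₀) := by
    rw [hψdef]
    simp only [hsymm0]
    refine Prod.ext rfl ?_
    have := A.act_assoc (hDinvself γ₀) hp
    rw [this]
    show A.act (S.src γ₀) x₀ = x₀
    rw [hp, A.act_unit]
  have hy₀V : A.act γ₀ x₀ ∈ V := ⟨hy₀O, by rw [Set.mem_preimage, hψy₀]; exact hpW⟩
  refine mem_nhds_iff.mpr ⟨V, ?_, hVopen, hy₀V⟩
  -- V ⊆ image
  rintro z ⟨hzO, hzW⟩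
  set γ := e.symm (A.rho z) with hγdef
  have hsrc : S.src (S.inv γ) = A.rho z := hkey z hzO
  have hrngγ : S.rng γ = A.rho z := by rw [he]; exact e.right_inv hzO
  set x := A.act (S.inv γ) z with hxdef
  have hmem : S.src γ = A.rho x := by
    rw [hxdef, A.rho_act hsrc, TopGroupoid.rng]
    show S.src γ = S.comp (S.inv γ) (S.inv (S.inv γ))
    rw [S.inv_inv]
    rfl
  refine ⟨⟨(γ, x), hmem⟩, hzW, ?_⟩
  show A.act γ x = z
  rw [hxdef, A.act_assoc (S.d_inv γ) hsrc, hcompinv]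
  show A.act (S.rng γ) z = z
  rw [hrngγ, A.act_unit]
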